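/- Let B > 0 and θ > 0, and let F : ℝ × ℝ → ℝ be a function with the property that for every ε > 0 there exists K > 0 such that |F(s, t)| ≤ ε s + K for all 0 ≤ s ≤ t. Then lim_{t → ∞} ∫_0^t ( t/θ + B s + F(s, t) )^{-1} ds = (1/B) log(1 + θ B) (in particular, for all sufficiently large t the integrand is well defined and positive on [0, t]). -/

import Mathlib

open MeasureTheory Filter

section helpers

lemma intervalIntegrable_affine_inv {b c t : ℝ} (hb : 0 < b) (hc : 0 < c) (ht : 0 ≤ t) :
    IntervalIntegrable (fun s => (c + b * s)⁻¹) volume 0 t := by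
  apply ContinuousOn.intervalIntegrable
  refine (continuousOn_const.add (continuousOn_const.mul continuousOn_id)).inv₀ ?_
  intro s hs
  rw [Set.uIcc_of_le ht] at hs
  have : 0 ≤ s := hs.1
  show c + b * s ≠ 0
  positivity

lemma integral_affine_inv {b c t : ℝ} (hb : 0 < b) (hc : 0 < c) (ht : 0 ≤ t) :
    ∫ s in (0:ℝ)..t, (c + b * s)⁻¹ = b⁻¹ * Real.log ((c + b * t) / c) := by
  have hpos : ∀ s ∈ Set.uIcc (0:ℝ) t, 0 < c + b * s := by
    intro s hs
    rw [Set.uIcc_of_le ht] at hs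
    have : 0 ≤ s := hs.1
    positivity
  have hderiv : ∀ s ∈ Set.uIcc (0:ℝ) t,
      HasDerivAt (fun x => b⁻¹ * Real.log (c + b * x)) (c + b * s)⁻¹ s := by
    intro s hs
    have h1 : HasDerivAt (fun x : ℝ => c + b * x) b s := by
      simpa using ((hasDerivAt_id s).const_mul b).const_add c
    have h2 := (Real.hasDerivAt_log (hpos s hs).ne').comp s h1
    have h3 := h2.const_mul b⁻¹
    have := (hpos s hs).ne'
    have := hb.ne'
    rw [show (c + b * s)⁻¹ = b⁻¹ * ((c + b * s)⁻¹ * b) by field_simp]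
    exact h3
  rw [intervalIntegral.integral_eq_sub_of_hasDerivAt hderiv
    (intervalIntegrable_affine_inv hb hc ht)]
  have h0 : c + b * 0 = c := by ring
  rw [h0, Real.log_div (by positivity) hc.ne']
  ring

lemma tendsto_log_ratio {b θ : ℝ} (K : ℝ) (hb : 0 < b) (hθ : 0 < θ) :
    Tendsto (fun t : ℝ => b⁻¹ * Real.log ((t / θ + K + b * t) / (t / θ + K)))
      atTop (nhds (b⁻¹ * Real.log (1 + θ * b))) := by
  have hratio : Tendsto (fun t : ℝ => (t / θ + K + b * t) / (t / θ + K))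
      atTop (nhds (1 + θ * b)) := by
    have hK : Tendsto (fun t : ℝ => K / t) atTop (nhds 0) :=
      tendsto_const_nhds.div_atTop tendsto_id
    have h2 : Tendsto (fun t : ℝ => θ⁻¹ + K / t) atTop (nhds (θ⁻¹ + 0)) :=
      tendsto_const_nhds.add hK
    have h1 : Tendsto (fun t : ℝ => θ⁻¹ + K / t + b) atTop (nhds (θ⁻¹ + 0 + b)) :=
      h2.add tendsto_const_nhds
    have hne : θ⁻¹ + 0 ≠ 0 := by positivity
    have hq := h1.div h2 hne
    have hval : (θ⁻¹ + 0 + b) / (θ⁻¹ + 0) = 1 + θ * b := by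
      field_simp
      ring
    rw [hval] at hq
    refine hq.congr' ?_
    filter_upwards [eventually_ge_atTop (θ * (|K| + 1))] with t ht
    have ht0 : 0 < t := lt_of_lt_of_le (by positivity) ht
    have htK : 0 < t / θ + K := by
      have : |K| + 1 ≤ t / θ := (le_div_iff₀ hθ).2 (by linarith)
      have := neg_abs_le K
      linarith
    have hden : 0 < θ⁻¹ + K / t := by
      have : θ⁻¹ + K / t = (t / θ + K) / t := by field_simp
      rw [this]; positivity
    simp only [Pi.div_apply]
    field_simp
  have hlog := (Real.continuousAt_log
    (by positivity : (0:ℝ) < 1 + θ * b).ne').tendsto.comp hratio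
  exact hlog.const_mul b⁻¹

end helpers

theorem perturbed_integral_limit (B θ : ℝ) (hB : 0 < B) (hθ : 0 < θ)
    (F : ℝ × ℝ → ℝ) (hFmeas : ∀ t, Measurable fun s => F (s, t))
    (hF : ∀ ε : ℝ, 0 < ε → ∃ K : ℝ, 0 < K ∧
      ∀ s t : ℝ, 0 ≤ s → s ≤ t → |F (s, t)| ≤ ε * s + K) :
    (∀ᶠ t in atTop, ∀ s ∈ Set.Icc (0:ℝ) t, 0 < t / θ + B * s + F (s, t)) ∧
    Tendsto (fun t : ℝ => ∫ s in (0:ℝ)..t, (t / θ + B * s + F (s, t))⁻¹)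
      atTop (nhds (B⁻¹ * Real.log (1 + θ * B))) := by
  constructor
  · obtain ⟨K₀, hK₀, hFb⟩ := hF (B / 2) (by positivity)
    filter_upwards [eventually_ge_atTop (θ * (K₀ + 1))] with t ht s hs
    have htθ : K₀ + 1 ≤ t / θ := (le_div_iff₀ hθ).2 (by linarith)
    have h := (abs_le.mp (hFb s t hs.1 hs.2)).1
    nlinarith [hs.1]
  · rw [Metric.tendsto_nhds]
    intro δ hδ
    set g : ℝ → ℝ := fun b => b⁻¹ * Real.log (1 + θ * b) with hg
    have haff : ContinuousAt (fun b : ℝ => 1 + θ * b) B := by fun_prop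
    have hlogc : ContinuousAt (fun b : ℝ => Real.log (1 + θ * b)) B :=
      haff.log (by positivity : (0:ℝ) < 1 + θ * B).ne'
    have hgc : ContinuousAt g B := (continuousAt_inv₀ hB.ne').mul hlogc
    obtain ⟨η, hη, hηc⟩ := Metric.continuousAt_iff.mp hgc (δ / 2) (by linarith)
    set ε : ℝ := min (η / 2) (B / 2) with hε
    have hε0 : 0 < ε := lt_min (by linarith) (by linarith)
    have hεB : ε < B := lt_of_le_of_lt (min_le_right _ _) (by linarith)
    have hεη : ε < η := lt_of_le_of_lt (min_le_left _ _) (by linarith)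
    obtain ⟨K, hK, hFb⟩ := hF ε hε0
    have hBp : 0 < B + ε := by linarith
    have hBm : 0 < B - ε := by linarith
    have hgp : |g (B + ε) - g B| < δ / 2 := by
      have := hηc (x := B + ε)
        (by rw [Real.dist_eq, show B + ε - B = ε by ring, abs_of_pos hε0]; exact hεη)
      rwa [Real.dist_eq] at this
    have hgm : |g (B - ε) - g B| < δ / 2 := by
      have := hηc (x := B - ε)
        (by rw [Real.dist_eq, show B - ε - B = -ε by ring, abs_neg, abs_of_pos hε0]; exact hεη)
      rwa [Real.dist_eq] at this
    have hLow := tendsto_log_ratio (b := B + ε) K hBp hθ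
    have hUp := tendsto_log_ratio (b := B - ε) (-K) hBm hθ
    rw [Metric.tendsto_nhds] at hLow hUp
    filter_upwards [eventually_ge_atTop (θ * (K + 1)), hLow (δ / 2) (by linarith),
      hUp (δ / 2) (by linarith)] with t ht hLt hUt
    have ht0 : 0 ≤ t := le_trans (by positivity) ht
    have htθ : K + 1 ≤ t / θ := (le_div_iff₀ hθ).2 (by linarith)
    have hc₁ : 0 < t / θ + K := by linarith
    have hc₂ : 0 < t / θ + -K := by linarith
    -- pointwise bounds
    have hDlo : ∀ s ∈ Set.Icc (0:ℝ) t, t / θ + -K + (B - ε) * s ≤ t / θ + B * s + F (s, t) := by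
      intro s hs
      have h := (abs_le.mp (hFb s t hs.1 hs.2)).1
      nlinarith [hs.1]
    have hDhi : ∀ s ∈ Set.Icc (0:ℝ) t, t / θ + B * s + F (s, t) ≤ t / θ + K + (B + ε) * s := by
      intro s hs
      have h := (abs_le.mp (hFb s t hs.1 hs.2)).2
      nlinarith [hs.1]
    have hDpos : ∀ s ∈ Set.Icc (0:ℝ) t, 0 < t / θ + B * s + F (s, t) := by
      intro s hs
      have := hDlo s hs
      nlinarith [hs.1]
    -- integrability
    have hmeas : Measurable fun s => (t / θ + B * s + F (s, t))⁻¹ :=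
      ((measurable_const.add (measurable_id.const_mul B)).add (hFmeas t)).inv
    have hfInt : IntervalIntegrable (fun s => (t / θ + B * s + F (s, t))⁻¹) volume 0 t := by
      rw [intervalIntegrable_iff_integrableOn_Icc_of_le ht0]
      refine Integrable.mono' (g := fun _ => (t / θ + -K)⁻¹) (integrableOn_const ?_) hmeas.aestronglyMeasurable ?_
      · simp [Real.volume_Icc]
      · refine (ae_restrict_iff' measurableSet_Icc).2 (ae_of_all _ fun s hs => ?_)
        show ‖(t / θ + B * s + F (s, t))⁻¹‖ ≤ (t / θ + -K)⁻¹
        rw [Real.norm_eq_abs, abs_of_pos (inv_pos.2 (hDpos s hs))]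
        refine inv_anti₀ hc₂ ?_
        calc t / θ + -K = t / θ + -K + (B - ε) * 0 := by ring
          _ ≤ t / θ + -K + (B - ε) * s := by nlinarith [hs.1]
          _ ≤ t / θ + B * s + F (s, t) := hDlo s hs
    have hloInt := intervalIntegrable_affine_inv hBp hc₁ ht0
    have hhiInt := intervalIntegrable_affine_inv hBm hc₂ ht0
    -- integral comparisons
    have hI1 : ∫ s in (0:ℝ)..t, (t / θ + K + (B + ε) * s)⁻¹
        ≤ ∫ s in (0:ℝ)..t, (t / θ + B * s + F (s, t))⁻¹ := by
      refine intervalIntegral.integral_mono_on ht0 hloInt hfInt fun s hs => ?_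
      exact inv_anti₀ (hDpos s hs) (hDhi s hs)
    have hI2 : ∫ s in (0:ℝ)..t, (t / θ + B * s + F (s, t))⁻¹
        ≤ ∫ s in (0:ℝ)..t, (t / θ + -K + (B - ε) * s)⁻¹ := by
      refine intervalIntegral.integral_mono_on ht0 hfInt hhiInt fun s hs => ?_
      have h0 : 0 < t / θ + -K + (B - ε) * s := by nlinarith [hs.1]
      exact inv_anti₀ h0 (hDlo s hs)
    rw [integral_affine_inv hBp hc₁ ht0] at hI1
    rw [integral_affine_inv hBm hc₂ ht0] at hI2
    -- conclude
    rw [Real.dist_eq] at hLt hUt ⊢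
    have h1 := abs_lt.mp hLt
    have h2 := abs_lt.mp hUt
    have h3 := abs_lt.mp hgp
    have h4 := abs_lt.mp hgm
    rw [abs_lt]
    simp only [hg] at h1 h2 h3 h4 ⊢
    exact ⟨by linarith [h1.1, h3.1], by linarith [h2.2, h4.2]⟩
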